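/- Let 0<α<2, c>0, s(y)=c·|y|^{-(1+α)} for y≠0, and let H:ℝ→ℝ be a Schwartz function. Then for every p with 0 ≤ p < (1+α)/2, one has sup_{x∈ℝ} (1+x²)^p·|Δ^{α/2}H(x)| < ∞, and moreover (1+x²)^p·Δ^{α/2}H(x) → 0 as |x| → ∞. -/

import Mathlib

open MeasureTheory

/-- The fractional Laplacian of `H` with kernel `s y = c * |y| ^ (-(1+α))`
(the integrand vanishes at `y = 0` since `0 ^ (-(1+α)) = 0`). -/
noncomputable def fracLap (α c : ℝ) (H : ℝ → ℝ) (x : ℝ) : ℝ :=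
  (1 / 2) * ∫ y : ℝ, c * |y| ^ (-(1 + α)) * (H (x + y) - 2 * H x + H (x - y))

section Aux
open Set


lemma myIntegrable_comp_abs {ψ : ℝ → ℝ} (h : IntegrableOn ψ (Ioi (0:ℝ))) :
    Integrable (fun y : ℝ => ψ |y|) := by
  have hIoi : IntegrableOn (fun y : ℝ => ψ |y|) (Ioi 0) := by
    refine h.congr_fun (fun y hy => ?_) measurableSet_Ioi
    rw [abs_eq_self.mpr (le_of_lt hy)]
  have hIic : IntegrableOn (fun y : ℝ => ψ |y|) (Iic 0) := by
    rw [← Measure.map_neg_eq_self (volume : Measure ℝ)]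
    let m : MeasurableEmbedding fun x : ℝ => -x := (Homeomorph.neg ℝ).measurableEmbedding
    rw [m.integrableOn_map_iff]
    simp_rw [Function.comp_def, abs_neg, neg_preimage, neg_Iic, neg_zero]
    exact Iff.mpr integrableOn_Ici_iff_integrableOn_Ioi hIoi
  have := hIic.union hIoi
  rwa [Iic_union_Ioi, integrableOn_univ] at this

lemma int_ps (K r q : ℝ) (hq : -1 < q) (hr : 0 < r) :
    Integrable (fun y : ℝ => indicator (Ioc 0 r) (fun t => K * t ^ q) |y|) ∧
    ∫ y : ℝ, indicator (Ioc 0 r) (fun t => K * t ^ q) |y| = 2 * (K * (r ^ (q + 1) / (q + 1))) := by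
  have hio : IntegrableOn (fun t : ℝ => K * t ^ q) (Ioc 0 r) := by
    have := (intervalIntegral.intervalIntegrable_rpow' (a := 0) (b := r) hq)
    rw [intervalIntegrable_iff_integrableOn_Ioc_of_le hr.le] at this
    exact this.const_mul K
  have hind : Integrable (indicator (Ioc 0 r) (fun t : ℝ => K * t ^ q)) :=
    hio.integrable_indicator measurableSet_Ioc
  refine ⟨myIntegrable_comp_abs hind.integrableOn, ?_⟩
  rw [integral_comp_abs (f := indicator (Ioc 0 r) (fun t : ℝ => K * t ^ q))]
  rw [setIntegral_indicator measurableSet_Ioc,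
    inter_eq_self_of_subset_right Ioc_subset_Ioi_self,
    ← intervalIntegral.integral_of_le hr.le]
  rw [intervalIntegral.integral_const_mul, integral_rpow (Or.inl hq)]
  rw [Real.zero_rpow (by linarith)]
  ring

lemma int_tail (K r q : ℝ) (hq : q < -1) (hr : 0 < r) :
    Integrable (fun y : ℝ => indicator (Ioi r) (fun t => K * t ^ q) |y|) ∧
    ∫ y : ℝ, indicator (Ioi r) (fun t => K * t ^ q) |y| = 2 * (K * (-r ^ (q + 1) / (q + 1))) := by
  have hio : IntegrableOn (fun t : ℝ => K * t ^ q) (Ioi r) :=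
    (integrableOn_Ioi_rpow_of_lt hq hr).const_mul K
  have hind : Integrable (indicator (Ioi r) (fun t : ℝ => K * t ^ q)) :=
    hio.integrable_indicator measurableSet_Ioi
  refine ⟨myIntegrable_comp_abs hind.integrableOn, ?_⟩
  rw [integral_comp_abs (f := indicator (Ioi r) (fun t : ℝ => K * t ^ q))]
  rw [setIntegral_indicator measurableSet_Ioi,
    inter_eq_self_of_subset_right (Ioi_subset_Ioi hr.le)]
  rw [MeasureTheory.integral_const_mul, integral_Ioi_rpow_of_lt hq hr]

lemma sd_bound (H : SchwartzMap ℝ ℝ) (x y M : ℝ)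
    (hM : ∀ t, |t - x| ≤ |y| → |deriv (deriv ⇑H) t| ≤ M) :
    |H (x + y) - 2 * H x + H (x - y)| ≤ 2 * M * y ^ 2 := by
  have hM0 : 0 ≤ M := le_trans (abs_nonneg _) (hM x (by simp [abs_nonneg]))
  have hd : Differentiable ℝ ⇑H := (H.smooth 1).differentiable (by simp)
  have hH1 : ⇑(SchwartzMap.derivCLM ℝ ℝ H) = deriv ⇑H :=
    funext fun t => SchwartzMap.derivCLM_apply ℝ H t
  have hd1 : Differentiable ℝ (deriv ⇑H) := by
    rw [← hH1]; exact ((SchwartzMap.derivCLM ℝ ℝ H).smooth 1).differentiable (by simp)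
  have lip : ∀ a, |a - x| ≤ |y| → |deriv ⇑H a - deriv ⇑H x| ≤ M * |a - x| := by
    intro a ha
    have hconv : Convex ℝ (Icc (x - |y|) (x + |y|)) := convex_Icc _ _
    have hmem : ∀ t : ℝ, |t - x| ≤ |y| → t ∈ Icc (x - |y|) (x + |y|) := by
      intro t ht
      rw [abs_le] at ht
      constructor <;> linarith [ht.1, ht.2]
    have := hconv.norm_image_sub_le_of_norm_deriv_le (f := deriv ⇑H) (C := M)
      (fun t _ => hd1 t) (fun t ht => by
        have h3 : |t - x| ≤ |y| := by
          rcases ht with ⟨h1, h2⟩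
          rw [abs_le]; constructor <;> linarith
        exact hM t h3)
      (hmem x (by simp)) (hmem a ha)
    simpa [Real.norm_eq_abs] using this
  set g : ℝ → ℝ := fun t => H (x + t) - t * deriv ⇑H x with hg
  have hgd : ∀ t : ℝ, HasDerivAt g (deriv ⇑H (x + t) - deriv ⇑H x) t := by
    intro t
    have h1 : HasDerivAt (fun t : ℝ => H (x + t)) (deriv ⇑H (x + t)) t := by
      have := ((hd (x + t)).hasDerivAt.comp t ((hasDerivAt_id t).const_add x))
      simp only [mul_one] at this
      exact this
    have := h1.sub ((hasDerivAt_id t).mul_const (deriv ⇑H x))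
    simp only [one_mul] at this
    exact this
  have key : ∀ b : ℝ, b ∈ Icc (-|y|) |y| → |g b - g 0| ≤ M * |y| * |b| := by
    intro b hb
    have hconv : Convex ℝ (Icc (-|y|) |y|) := convex_Icc _ _
    have h0 : (0:ℝ) ∈ Icc (-|y|) |y| := ⟨by simp [abs_nonneg], abs_nonneg y⟩
    have := hconv.norm_image_sub_le_of_norm_hasDerivWithin_le
      (f := g) (f' := fun t => deriv ⇑H (x + t) - deriv ⇑H x) (C := M * |y|)
      (fun t _ => (hgd t).hasDerivWithinAt)
      (fun t ht => by
        have h2 : |t| ≤ |y| := abs_le.mpr ⟨ht.1, ht.2⟩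
        have h1 : |(x + t) - x| ≤ |y| := by simpa using h2
        calc ‖deriv ⇑H (x + t) - deriv ⇑H x‖ ≤ M * |(x + t) - x| := by
              simpa [Real.norm_eq_abs] using lip (x + t) h1
          _ ≤ M * |y| := mul_le_mul_of_nonneg_left h1 hM0)
      h0 hb
    simpa [Real.norm_eq_abs] using this
  have hy : y ∈ Icc (-|y|) |y| := ⟨neg_abs_le y, le_abs_self y⟩
  have hny : -y ∈ Icc (-|y|) |y| := ⟨neg_le_neg (le_abs_self y), neg_le_abs y⟩
  have k1 := key y hy
  have k2 := key (-y) hny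
  have e1 : g y - g 0 = H (x + y) - y * deriv ⇑H x - H x := by simp [hg]
  have e2 : g (-y) - g 0 = H (x - y) + y * deriv ⇑H x - H x := by
    simp [hg, sub_eq_add_neg]
  have esum : H (x + y) - 2 * H x + H (x - y) = (g y - g 0) + (g (-y) - g 0) := by
    rw [e1, e2]; ring
  rw [esum]
  calc |(g y - g 0) + (g (-y) - g 0)| ≤ |g y - g 0| + |g (-y) - g 0| := abs_add_le _ _
    _ ≤ M * |y| * |y| + M * |y| * |-y| := add_le_add k1 k2
    _ = 2 * M * y ^ 2 := by rw [abs_neg, ← sq_abs]; ring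

lemma core_bound (α c : ℝ) (hα0 : 0 < α) (hα2 : α < 2) (hc : 0 < c)
    (H : SchwartzMap ℝ ℝ) (x r M2 : ℝ) (hr : 0 < r)
    (hM2 : ∀ t, |t - x| ≤ r → |deriv (deriv ⇑H) t| ≤ M2) :
    |fracLap α c ⇑H x| ≤
      c * (2 * M2 * (r ^ (2 - α) / (2 - α)) + r ^ (-(1 + α)) * (∫ t : ℝ, |H t|)
        + 2 * |H x| * (r ^ (-α) / α)) := by
  have hM2nn : 0 ≤ M2 := le_trans (abs_nonneg _) (hM2 x (by simp [hr.le]))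
  set L : ℝ := ∫ t : ℝ, |H t| with hL
  obtain ⟨h1int, h1val⟩ := int_ps (2*c*M2) r (1-α) (by linarith) hr
  obtain ⟨h3int, h3val⟩ := int_tail (2*c*|H x|) r (-(1+α)) (by linarith) hr
  have hHint : Integrable (⇑H) := H.integrable
  have h2aint : Integrable (fun y : ℝ => |H (x + y)|) := hHint.abs.comp_add_left x
  have h2bint : Integrable (fun y : ℝ => |H (x - y)|) := hHint.abs.comp_sub_left x
  have h2int : Integrable (fun y : ℝ => c * r ^ (-(1+α)) * (|H (x + y)| + |H (x - y)|)) :=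
    ((h2aint.add h2bint).const_mul _)
  have h2val : ∫ y : ℝ, c * r ^ (-(1+α)) * (|H (x + y)| + |H (x - y)|)
      = c * r ^ (-(1+α)) * (L + L) := by
    rw [MeasureTheory.integral_const_mul, integral_add h2aint h2bint,
      integral_add_left_eq_self (fun t => |H t|) x,
      integral_sub_left_eq_self (fun t => |H t|) volume x]
  have h12int : Integrable (fun y : ℝ => indicator (Ioc 0 r) (fun t => 2*c*M2 * t ^ (1-α)) |y|
      + c * r ^ (-(1+α)) * (|H (x + y)| + |H (x - y)|)) := h1int.add h2int
  set g : ℝ → ℝ := fun y => indicator (Ioc 0 r) (fun t => 2*c*M2 * t ^ (1-α)) |y|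
      + c * r ^ (-(1+α)) * (|H (x + y)| + |H (x - y)|)
      + indicator (Ioi r) (fun t => 2*c*|H x| * t ^ (-(1+α))) |y| with hgdef
  have hgint : Integrable g := h12int.add h3int
  have hg1nn : ∀ y : ℝ, 0 ≤ indicator (Ioc 0 r) (fun t => 2*c*M2 * t ^ (1-α)) |y| := by
    intro y
    apply indicator_nonneg
    intro t ht
    have := Real.rpow_nonneg (le_of_lt ht.1) (1-α)
    positivity
  have hg3nn : ∀ y : ℝ, 0 ≤ indicator (Ioi r) (fun t => 2*c*|H x| * t ^ (-(1+α))) |y| := by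
    intro y
    apply indicator_nonneg
    intro t ht
    have := Real.rpow_nonneg (le_of_lt (hr.trans ht)) (-(1+α))
    positivity
  have hg2nn : ∀ y : ℝ, 0 ≤ c * r ^ (-(1+α)) * (|H (x + y)| + |H (x - y)|) := by
    intro y; positivity
  have hbound : ∀ y : ℝ,
      ‖c * |y| ^ (-(1 + α)) * (H (x + y) - 2 * H x + H (x - y))‖ ≤ g y := by
    intro y
    rw [Real.norm_eq_abs, abs_mul, abs_mul, abs_of_pos hc,
      abs_of_nonneg (Real.rpow_nonneg (abs_nonneg y) _)]
    by_cases hy0 : y = 0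
    · subst hy0
      rw [abs_zero, Real.zero_rpow (by linarith)]
      simp only [mul_zero, zero_mul]
      exact le_trans (by simp) (add_nonneg (add_nonneg (hg1nn 0) (hg2nn 0)) (hg3nn 0))
    · have hyy : 0 < |y| := abs_pos.mpr hy0
      rcases le_or_gt |y| r with hyr | hyr
      · -- small y
        have hD := sd_bound H x y M2 (fun t ht => hM2 t (ht.trans hyr))
        have step1 : c * |y| ^ (-(1+α)) * |H (x + y) - 2 * H x + H (x - y)|
            ≤ c * |y| ^ (-(1+α)) * (2 * M2 * y ^ 2) := by
          apply mul_le_mul_of_nonneg_left hD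
          positivity
        have heq : c * |y| ^ (-(1+α)) * (2 * M2 * y ^ 2) = 2*c*M2 * |y| ^ (1-α) := by
          have h2 : (y:ℝ) ^ 2 = |y| ^ ((2:ℕ):ℝ) := by
            rw [Real.rpow_natCast]; rw [sq_abs]
          rw [h2, show ((2:ℕ):ℝ) = (2:ℝ) by norm_num]
          rw [mul_comm (2 * M2) (|y| ^ (2:ℝ))]
          rw [show c * |y| ^ (-(1+α)) * (|y| ^ (2:ℝ) * (2 * M2))
              = 2*c*M2 * (|y| ^ (-(1+α)) * |y| ^ (2:ℝ)) from by ring]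
          rw [← Real.rpow_add hyy, show -(1+α)+(2:ℝ) = 1-α from by ring]
        have hmem : |y| ∈ Ioc 0 r := ⟨hyy, hyr⟩
        have : indicator (Ioc 0 r) (fun t => 2*c*M2 * t ^ (1-α)) |y|
            = 2*c*M2 * |y| ^ (1-α) := indicator_of_mem hmem _
        calc c * |y| ^ (-(1+α)) * |H (x + y) - 2 * H x + H (x - y)|
            ≤ 2*c*M2 * |y| ^ (1-α) := by rw [← heq]; exact step1
          _ ≤ g y := by
              rw [hgdef]; simp only []
              rw [this]
              have := hg2nn y; have := hg3nn y
              linarith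
      · -- large y
        have hD : |H (x + y) - 2 * H x + H (x - y)|
            ≤ |H (x + y)| + |H (x - y)| + 2 * |H x| := by
          calc |H (x + y) - 2 * H x + H (x - y)|
              ≤ |H (x + y) - 2 * H x| + |H (x - y)| := abs_add_le _ _
            _ ≤ |H (x + y)| + |2 * H x| + |H (x - y)| :=
                add_le_add_left (abs_sub _ _) _
            _ = |H (x + y)| + |H (x - y)| + 2 * |H x| := by
                rw [abs_mul]; norm_num; ring
        have hry : |y| ^ (-(1+α)) ≤ r ^ (-(1+α)) :=
          Real.rpow_le_rpow_of_nonpos hr hyr.le (by linarith)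
        have hmem : |y| ∈ Ioi r := hyr
        have h3eq : indicator (Ioi r) (fun t => 2*c*|H x| * t ^ (-(1+α))) |y|
            = 2*c*|H x| * |y| ^ (-(1+α)) := indicator_of_mem hmem _
        have step : c * |y| ^ (-(1+α)) * |H (x + y) - 2 * H x + H (x - y)|
            ≤ c * |y| ^ (-(1+α)) * (|H (x + y)| + |H (x - y)|)
              + 2*c*|H x| * |y| ^ (-(1+α)) := by
          have := mul_le_mul_of_nonneg_left hD
            (show (0:ℝ) ≤ c * |y| ^ (-(1+α)) from by positivity)
          calc c * |y| ^ (-(1+α)) * |H (x + y) - 2 * H x + H (x - y)|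
              ≤ c * |y| ^ (-(1+α)) * (|H (x + y)| + |H (x - y)| + 2 * |H x|) := this
            _ = c * |y| ^ (-(1+α)) * (|H (x + y)| + |H (x - y)|)
                + 2*c*|H x| * |y| ^ (-(1+α)) := by ring
        calc c * |y| ^ (-(1+α)) * |H (x + y) - 2 * H x + H (x - y)|
            ≤ c * |y| ^ (-(1+α)) * (|H (x + y)| + |H (x - y)|)
              + 2*c*|H x| * |y| ^ (-(1+α)) := step
          _ ≤ c * r ^ (-(1+α)) * (|H (x + y)| + |H (x - y)|)
              + 2*c*|H x| * |y| ^ (-(1+α)) := by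
              apply add_le_add_left
              apply mul_le_mul_of_nonneg_right _ (by positivity)
              apply mul_le_mul_of_nonneg_left hry hc.le
          _ ≤ g y := by
              rw [hgdef]; simp only []
              rw [h3eq]
              have := hg1nn y
              linarith
  have hnorm := norm_integral_le_of_norm_le hgint (Filter.Eventually.of_forall hbound)
  have hsplit : ∫ y, g y = 2 * (2*c*M2 * (r ^ ((1-α)+1) / ((1-α)+1)))
      + c * r ^ (-(1+α)) * (L + L)
      + 2 * (2*c*|H x| * (-r ^ ((-(1+α))+1) / ((-(1+α))+1))) := by
    rw [hgdef]
    rw [integral_add h12int h3int, integral_add h1int h2int,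
      h1val, h2val, h3val]
  rw [show (1:ℝ)-α+1 = 2-α from by ring, show -(1+α)+1 = -α from by ring] at hsplit
  have hfl : |fracLap α c ⇑H x|
      ≤ (1/2) * ∫ y, g y := by
    rw [fracLap, abs_mul, abs_of_pos (show (0:ℝ) < 1/2 from by norm_num)]
    apply mul_le_mul_of_nonneg_left _ (by norm_num)
    simpa [Real.norm_eq_abs] using hnorm
  refine hfl.trans ?_
  rw [hsplit]
  have hα' : α ≠ 0 := ne_of_gt hα0
  have : -r ^ (-α) / (-α) = r ^ (-α) / α := by field_simp
  rw [this]
  apply le_of_eq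
  ring

lemma deriv2_decay (H : SchwartzMap ℝ ℝ) (k : ℕ) :
    ∃ C : ℝ, 0 < C ∧ ∀ t : ℝ, |t| ^ k * |deriv (deriv ⇑H) t| ≤ C := by
  set H2 := SchwartzMap.derivCLM ℝ ℝ (SchwartzMap.derivCLM ℝ ℝ H) with hH2def
  have h1 : ⇑(SchwartzMap.derivCLM ℝ ℝ H) = deriv ⇑H :=
    funext fun s => SchwartzMap.derivCLM_apply ℝ H s
  have hH2 : ∀ t, H2 t = deriv (deriv ⇑H) t := by
    intro t
    rw [hH2def, SchwartzMap.derivCLM_apply, h1]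
  obtain ⟨C, hCpos, hC⟩ := H2.decay k 0
  refine ⟨C, hCpos, fun t => ?_⟩
  have := hC t
  simpa [Real.norm_eq_abs, norm_iteratedFDeriv_zero, hH2 t] using this

lemma H_decay (H : SchwartzMap ℝ ℝ) (k : ℕ) :
    ∃ C : ℝ, 0 < C ∧ ∀ t : ℝ, |t| ^ k * |H t| ≤ C := by
  obtain ⟨C, hCpos, hC⟩ := H.decay k 0
  refine ⟨C, hCpos, fun t => ?_⟩
  have := hC t
  simpa [Real.norm_eq_abs, norm_iteratedFDeriv_zero] using this
lemma main_bound (α c : ℝ) (hα0 : 0 < α) (hα2 : α < 2) (hc : 0 < c) (H : SchwartzMap ℝ ℝ) :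
    ∃ C : ℝ, 0 ≤ C ∧ ∀ x : ℝ, (1 + x ^ 2) ^ ((1+α)/2) * |fracLap α c ⇑H x| ≤ C := by
  obtain ⟨C₂, hC₂pos, hC₂⟩ := deriv2_decay H 0
  obtain ⟨C₃, hC₃pos, hC₃⟩ := deriv2_decay H 3
  obtain ⟨C₀, hC₀pos, hC₀⟩ := H_decay H 0
  obtain ⟨C₁, hC₁pos, hC₁⟩ := H_decay H 1
  set L : ℝ := ∫ t : ℝ, |H t| with hLdef
  have hL : 0 ≤ L := integral_nonneg (fun t => abs_nonneg _)
  have h2α : (0:ℝ) < 2 - α := by linarith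
  set e : ℝ := (1+α)/2 with hedef
  have he : 0 ≤ e := by rw [hedef]; positivity
  set B₁ : ℝ := c * (2 * C₂ * (1 / (2-α)) + 1 * L + 2 * C₀ * (1/α)) with hB
  have hB₁nn : 0 ≤ B₁ := by
    rw [hB]
    apply mul_nonneg hc.le
    have w1 : (0:ℝ) ≤ 1/(2-α) := le_of_lt (div_pos one_pos h2α)
    have w2 : (0:ℝ) ≤ 1/α := le_of_lt (div_pos one_pos hα0)
    have := hC₂pos.le; have := hC₀pos.le
    positivity
  have bound1 : ∀ x, |fracLap α c ⇑H x| ≤ B₁ := by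
    intro x
    have hM2 : ∀ t, |t - x| ≤ 1 → |deriv (deriv ⇑H) t| ≤ C₂ := fun t _ => by
      simpa using hC₂ t
    have hcore := core_bound α c hα0 hα2 hc H x 1 C₂ one_pos hM2
    rw [Real.one_rpow, Real.one_rpow, Real.one_rpow] at hcore
    refine hcore.trans ?_
    rw [hB]
    have hH0 : |H x| ≤ C₀ := by simpa using hC₀ x
    have w2 : (0:ℝ) ≤ 1/α := le_of_lt (div_pos one_pos hα0)
    have : 2 * |H x| * (1/α) ≤ 2 * C₀ * (1/α) := by
      apply mul_le_mul_of_nonneg_right _ w2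
      linarith
    have hLL : (1:ℝ) * L ≤ 1 * L := le_refl _
    apply mul_le_mul_of_nonneg_left _ hc.le
    have heq : C₂ * (1/(2-α)) = C₂ * (1/(2-α)) := rfl
    linarith [this]
  set K : ℝ := c * (2*C₃/(2-α) + L + C₁/α) with hK
  have hKnn : 0 ≤ K := by
    rw [hK]
    apply mul_nonneg hc.le
    have w1 : (0:ℝ) ≤ 2*C₃/(2-α) := le_of_lt (div_pos (by linarith) h2α)
    have w2 : (0:ℝ) ≤ C₁/α := le_of_lt (div_pos hC₁pos hα0)
    linarith
  have bound2 : ∀ x : ℝ, 1 ≤ |x| → |fracLap α c ⇑H x| ≤ K * (|x|/2) ^ (-(1+α)) := by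
    intro x hx1
    set ρ : ℝ := |x|/2 with hρdef
    have hρ : 0 < ρ := by rw [hρdef]; linarith
    have hxρ : |x| = 2*ρ := by rw [hρdef]; ring
    have hM2 : ∀ t, |t - x| ≤ ρ → |deriv (deriv ⇑H) t| ≤ C₃ / ρ^3 := by
      intro t ht
      have h2 : |x| - |t| ≤ |t - x| := by
        have := abs_sub_abs_le_abs_sub x t
        rwa [abs_sub_comm] at this
      have h1 : ρ ≤ |t| := by linarith
      rw [le_div_iff₀ (by positivity)]
      calc |deriv (deriv ⇑H) t| * ρ^3 ≤ |deriv (deriv ⇑H) t| * |t|^3 := by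
            apply mul_le_mul_of_nonneg_left (pow_le_pow_left₀ hρ.le h1 3) (abs_nonneg _)
        _ ≤ C₃ := by rw [mul_comm]; exact hC₃ t
    have hcore := core_bound α c hα0 hα2 hc H x ρ (C₃/ρ^3) hρ hM2
    have hHx : |H x| ≤ C₁ / (2*ρ) := by
      rw [le_div_iff₀ (by positivity)]
      calc |H x| * (2*ρ) = |x| * |H x| := by rw [hxρ]; ring
        _ ≤ C₁ := by simpa using hC₁ x
    have e1 : ρ ^ ((2:ℝ)-α) = ρ ^ (-(1+α)) * ρ^3 := by
      rw [← Real.rpow_natCast ρ 3, ← Real.rpow_add hρ]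
      congr 1; push_cast; ring
    have e2 : ρ ^ (-α) = ρ ^ (-(1+α)) * ρ := by
      have h := Real.rpow_add hρ (-(1+α)) 1
      rw [Real.rpow_one] at h
      rw [← h]; congr 1; ring
    refine hcore.trans ?_
    have hmid : c * (2 * (C₃/ρ^3) * (ρ^((2:ℝ)-α)/(2-α)) + ρ^(-(1+α)) * L
          + 2*|H x| * (ρ^(-α)/α))
        ≤ c * (2 * (C₃/ρ^3) * (ρ^((2:ℝ)-α)/(2-α)) + ρ^(-(1+α)) * L
          + 2*(C₁/(2*ρ)) * (ρ^(-α)/α)) := by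
      apply mul_le_mul_of_nonneg_left _ hc.le
      have wρα : (0:ℝ) ≤ ρ^(-α)/α := le_of_lt (div_pos (Real.rpow_pos_of_pos hρ _) hα0)
      have : 2*|H x| * (ρ^(-α)/α) ≤ 2*(C₁/(2*ρ)) * (ρ^(-α)/α) := by
        apply mul_le_mul_of_nonneg_right _ wρα
        linarith
      linarith
    refine hmid.trans (le_of_eq ?_)
    rw [e1, e2, hK]
    have hα' : α ≠ 0 := ne_of_gt hα0
    have h2α' : (2:ℝ) - α ≠ 0 := ne_of_gt h2α
    have hρ' : ρ ≠ 0 := ne_of_gt hρ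
    field_simp
  refine ⟨max ((2:ℝ)^e * B₁) ((8:ℝ)^e * K), ?_, fun x => ?_⟩
  · apply le_max_of_le_left
    positivity
  rcases le_or_gt |x| 1 with hx | hx
  · have h1 : (1+x^2:ℝ) ≤ 2 := by nlinarith [sq_abs x, abs_nonneg x]
    have h2 : (1+x^2:ℝ)^e ≤ 2^e := Real.rpow_le_rpow (by positivity) h1 he
    calc (1+x^2:ℝ)^e * |fracLap α c ⇑H x| ≤ 2^e * B₁ :=
          mul_le_mul h2 (bound1 x) (abs_nonneg _) (by positivity)
      _ ≤ _ := le_max_left _ _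
  · have hx1 : 1 ≤ |x| := hx.le
    have hb2 := bound2 x hx1
    have hρ : 0 < |x|/2 := by linarith
    have hsq : (|x|/2:ℝ)^(-(1+α)) = (((|x|/2)^2:ℝ))^(-e) := by
      rw [← Real.rpow_natCast (|x|/2) 2, ← Real.rpow_mul hρ.le]
      congr 1; rw [hedef]; push_cast; ring
    have h8 : (1+x^2:ℝ) ≤ 8 * (|x|/2)^2 := by
      have h1 : (1:ℝ) ≤ x^2 := by nlinarith [sq_abs x]
      have h9 : ((|x|/2)^2:ℝ) = x^2/4 := by rw [div_pow, sq_abs]; norm_num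
      rw [h9]; linarith
    have key : (1+x^2:ℝ)^e * (((|x|/2)^2:ℝ))^(-e) ≤ 8^e := by
      rw [Real.rpow_neg (by positivity), ← div_eq_mul_inv,
        div_le_iff₀ (Real.rpow_pos_of_pos (by positivity) _)]
      rw [← Real.mul_rpow (by norm_num) (by positivity)]
      exact Real.rpow_le_rpow (by positivity) h8 he
    calc (1+x^2:ℝ)^e * |fracLap α c ⇑H x|
        ≤ (1+x^2:ℝ)^e * (K * (|x|/2)^(-(1+α))) :=
          mul_le_mul_of_nonneg_left hb2 (by positivity)
      _ = K * ((1+x^2:ℝ)^e * (((|x|/2)^2:ℝ))^(-e)) := by rw [hsq]; ring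
      _ ≤ K * 8^e := mul_le_mul_of_nonneg_left key hKnn
      _ = 8^e * K := mul_comm _ _
      _ ≤ _ := le_max_right _ _

end Aux

/-- For `0 < α < 2`, `c > 0`, a Schwartz function `H` and
`0 ≤ p < (1+α)/2`, the weighted function `(1+x²)^p * Δ^{α/2}H(x)` is bounded
and vanishes at infinity. -/
theorem fracLap_weighted_bounded_vanishing
    (α c p : ℝ) (hα0 : 0 < α) (hα2 : α < 2) (hc : 0 < c)
    (hp0 : 0 ≤ p) (hp : p < (1 + α) / 2) (H : SchwartzMap ℝ ℝ) :
    (∃ M : ℝ, ∀ x : ℝ, (1 + x ^ 2) ^ p * |fracLap α c ⇑H x| ≤ M) ∧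
    Filter.Tendsto (fun x : ℝ => (1 + x ^ 2) ^ p * fracLap α c ⇑H x)
      (Filter.cocompact ℝ) (nhds 0) := by
  obtain ⟨C, hCnn, hC⟩ := main_bound α c hα0 hα2 hc H
  set e : ℝ := (1+α)/2 with hedef
  have hbase : ∀ x : ℝ, (1:ℝ) ≤ 1 + x^2 := fun x => by nlinarith [sq_nonneg x]
  constructor
  · refine ⟨C, fun x => ?_⟩
    have h1 : (1 + x^2:ℝ)^p ≤ (1 + x^2:ℝ)^e :=
      Real.rpow_le_rpow_of_exponent_le (hbase x) hp.le
    calc (1 + x^2:ℝ)^p * |fracLap α c ⇑H x|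
        ≤ (1 + x^2:ℝ)^e * |fracLap α c ⇑H x| :=
          mul_le_mul_of_nonneg_right h1 (abs_nonneg _)
      _ ≤ C := hC x
  · have hb : ∀ x : ℝ, ‖(1 + x^2:ℝ)^p * fracLap α c ⇑H x‖
        ≤ C * (1 + x^2:ℝ)^(p - e) := by
      intro x
      have hpos : (0:ℝ) < 1 + x^2 := lt_of_lt_of_le one_pos (hbase x)
      rw [Real.norm_eq_abs, abs_mul, abs_of_pos (Real.rpow_pos_of_pos hpos p)]
      have hsplit : (1 + x^2:ℝ)^p = (1 + x^2:ℝ)^(p-e) * (1 + x^2:ℝ)^e := by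
        rw [← Real.rpow_add hpos]; congr 1; ring
      rw [hsplit, mul_assoc]
      rw [mul_comm C _]
      apply mul_le_mul_of_nonneg_left (hC x) (Real.rpow_nonneg hpos.le _)
    apply squeeze_zero_norm hb
    have h1 : Filter.Tendsto (fun x : ℝ => 1 + x^2) (Filter.cocompact ℝ) Filter.atTop := by
      have h2 : Filter.Tendsto (fun t : ℝ => 1 + t^2) Filter.atTop Filter.atTop :=
        Filter.tendsto_atTop_add_const_left _ 1 (Filter.tendsto_pow_atTop two_ne_zero)
      have h3 := h2.comp (tendsto_norm_cocompact_atTop (E := ℝ))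
      convert h3 using 2 with x
      simp [Function.comp, Real.norm_eq_abs, sq_abs]
    have h3 : Filter.Tendsto (fun t : ℝ => t ^ (p - e)) Filter.atTop (nhds 0) := by
      have := tendsto_rpow_neg_atTop (y := e - p) (by linarith)
      simpa [neg_sub] using this
    have := (h3.comp h1).const_mul C
    simpa using this
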